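/- arXiv:2306.14706 — 2 statements merged into one kernel-verified Lean document; each statement's English description precedes it below -/
import Mathlib

section
/- Let $q_1,\ldots,q_m\in[1,\infty)$ with $1/q=\sum_{i=1}^m 1/q_i$. If $\omega_1^{q_1},\ldots,\omega_m^{q_m}$ are $A_\infty$ weights on $\mathbb{R}^n$ and $u_{\vec\omega}^q=\prod_{i=1}^m\omega_i^q$ is also an $A_\infty$ weight, then for every ball $B\subseteq\mathbb{R}^n$ one has the two-sided comparison $\prod_{i=1}^m\|\omega_i\|_{L^{q_i}(B)}\approx\|u_{\vec\omega}\|_{L^q(B)}$, with implicit constants independent of $B$. -/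
open MeasureTheory Metric Set ENNReal
open scoped BigOperators NNReal

noncomputable section

/-- Euclidean space `ℝⁿ`. -/
abbrev Rn (n : ℕ) := EuclideanSpace ℝ (Fin n)

namespace Paper

/-- Weighted measure of a set, `ω(E) = ∫_E ω`. -/
noncomputable def wInt {n : ℕ} (ω : Rn n → ℝ≥0∞) (s : Set (Rn n)) : ℝ≥0∞ :=
  ∫⁻ y in s, ω y

/-- `‖ω‖_{L^q(s)} = (∫_s ω^q)^{1/q}`. -/
noncomputable def lqN {n : ℕ} (ω : Rn n → ℝ≥0∞) (q : ℝ) (s : Set (Rn n)) : ℝ≥0∞ :=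
  (∫⁻ y in s, ω y ^ q) ^ (1 / q)

/-- Weighted `L^p` norm of a real function on a set: `(∫_s |f|^p σ)^{1/p}`. -/
noncomputable def wLpN {n : ℕ} (f : Rn n → ℝ) (p : ℝ) (σ : Rn n → ℝ≥0∞)
    (s : Set (Rn n)) : ℝ≥0∞ :=
  (∫⁻ y in s, ENNReal.ofReal |f y| ^ p * σ y) ^ (1 / p)

/-- Muckenhoupt `A_p` class, `1 < p < ∞`. -/
def MuckAp {n : ℕ} (ω : Rn n → ℝ≥0∞) (p : ℝ) : Prop :=
  1 < p ∧ ∃ C : ℝ≥0∞, C ≠ ⊤ ∧ ∀ (x : Rn n) (r : ℝ), 0 < r →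
    ((volume (ball x r))⁻¹ * ∫⁻ y in ball x r, ω y) *
      (((volume (ball x r))⁻¹ * ∫⁻ y in ball x r, (ω y) ^ (-(1 / (p - 1)))) ^ (p - 1)) ≤ C

/-- Muckenhoupt `A_1` class. -/
def MuckA1 {n : ℕ} (ω : Rn n → ℝ≥0∞) : Prop :=
  ∃ C : ℝ≥0∞, C ≠ ⊤ ∧ ∀ (x : Rn n) (r : ℝ), 0 < r →
    (volume (ball x r))⁻¹ * ∫⁻ y in ball x r, ω y ≤
      C * essInf ω (volume.restrict (ball x r))

/-- `A_∞ = ⋃_{1 ≤ p < ∞} A_p`. -/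
def MuckAinfty {n : ℕ} (ω : Rn n → ℝ≥0∞) : Prop :=
  MuckA1 ω ∨ ∃ p : ℝ, MuckAp ω p

/-- Average of `b` over the ball `B(x,r)`. -/
noncomputable def ballAvg {n : ℕ} (b : Rn n → ℝ) (x : Rn n) (r : ℝ) : ℝ :=
  ⨍ y in ball x r, b y

/-- BMO seminorm. -/
noncomputable def bmoNorm {n : ℕ} (b : Rn n → ℝ) : ℝ≥0∞ :=
  ⨆ (x : Rn n) (r : ℝ) (_ : 0 < r),
    (volume (ball x r))⁻¹ * ∫⁻ y in ball x r, ENNReal.ofReal |b y - ballAvg b x r|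

/-- The `i`-th factor in the multiple `A_{\vec P, q}` condition; for `p = 1` it is
`(essinf_B ω)⁻¹` and otherwise `((1/|B|)∫_B ω^{-p'})^{1/p'}` with `p' = p/(p-1)`. -/
noncomputable def apFactor {n : ℕ} (ω : Rn n → ℝ≥0∞) (p : ℝ) (s : Set (Rn n)) : ℝ≥0∞ :=
  if p = 1 then (essInf ω (volume.restrict s))⁻¹
  else ((volume s)⁻¹ * ∫⁻ y in s, (ω y) ^ (-(p / (p - 1)))) ^ ((p - 1) / p)

/-- The multiple Muckenhoupt class `A_{\vec P, q}` of Moen. -/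
def IsApq {n m : ℕ} (ω : Fin m → Rn n → ℝ≥0∞) (p : Fin m → ℝ) (q : ℝ) : Prop :=
  ∃ C : ℝ≥0∞, C ≠ ⊤ ∧ ∀ (x : Rn n) (r : ℝ), 0 < r →
    (((volume (ball x r))⁻¹ * ∫⁻ y in ball x r, (∏ i, ω i y) ^ q) ^ (1 / q)) *
      ∏ i, apFactor (ω i) (p i) (ball x r) ≤ C

/-- Generalized weighted Morrey norm of an `ℝ≥0∞`-valued function `F`:
`sup_{x,r} φ(x,r)⁻¹ σ(B(x,r))^{-1/p} (∫_{B(x,r)} F^p σ)^{1/p}`. -/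
noncomputable def morreyNorm {n : ℕ} (F : Rn n → ℝ≥0∞) (p : ℝ)
    (φ : Rn n → ℝ → ℝ≥0∞) (σ : Rn n → ℝ≥0∞) : ℝ≥0∞ :=
  ⨆ (x : Rn n) (r : ℝ) (_ : 0 < r),
    (φ x r)⁻¹ * ((wInt σ (ball x r)) ^ (1 / p))⁻¹ *
      (∫⁻ y in ball x r, F y ^ p * σ y) ^ (1 / p)

/-- Weak generalized weighted Morrey norm. -/
noncomputable def wMorreyNorm {n : ℕ} (F : Rn n → ℝ≥0∞) (p : ℝ)
    (φ : Rn n → ℝ → ℝ≥0∞) (σ : Rn n → ℝ≥0∞) : ℝ≥0∞ :=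
  ⨆ (x : Rn n) (r : ℝ) (_ : 0 < r),
    (φ x r)⁻¹ * ((wInt σ (ball x r)) ^ (1 / p))⁻¹ *
      ⨆ t : ℝ≥0, (t : ℝ≥0∞) *
        (wInt σ (ball x r ∩ {y | (t : ℝ≥0∞) < F y})) ^ (1 / p)

/-- Multilinear fractional maximal operator
`M_α(f)(x) = sup_{r>0} |B(x,r)|^{α/n - m} ∏_i ∫_{B(x,r)} |f_i|`. -/
noncomputable def Malpha {n m : ℕ} (α : ℝ) (f : Fin m → Rn n → ℝ) (x : Rn n) : ℝ≥0∞ :=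
  ⨆ (r : ℝ) (_ : 0 < r),
    (volume (ball x r)) ^ (α / (n : ℝ) - (m : ℝ)) *
      ∏ i, ∫⁻ y in ball x r, ENNReal.ofReal |f i y|

/-- Variant of the multilinear fractional maximal operator with exponents `α_i`:
`sup_{t>0} ∏_i |B(x,t)|^{α_i/n - 1} ∫_{B(x,t)} |f_i|`. -/
noncomputable def MalphaVec {n m : ℕ} (αv : Fin m → ℝ) (f : Fin m → Rn n → ℝ)
    (x : Rn n) : ℝ≥0∞ :=
  ⨆ (t : ℝ) (_ : 0 < t),
    ∏ i, (volume (ball x t)) ^ (αv i / (n : ℝ) - 1) *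
      ∫⁻ y in ball x t, ENNReal.ofReal |f i y|

/-- Multilinear fractional integral operator of Kenig–Stein. -/
noncomputable def Ialpha {n m : ℕ} (α : ℝ) (f : Fin m → Rn n → ℝ) (x : Rn n) : ℝ≥0∞ :=
  ∫⁻ y : Fin m → Rn n,
    (∏ i, ENNReal.ofReal |f i (y i)|) /
      ENNReal.ofReal (∑ i, dist x (y i)) ^ ((m : ℝ) * (n : ℝ) - α)

/-- Iterated commutator of the multilinear fractional maximal operator. -/
noncomputable def McommPi {n m : ℕ} (α : ℝ) (b : Fin m → Rn n → ℝ)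
    (f : Fin m → Rn n → ℝ) (x : Rn n) : ℝ≥0∞ :=
  ⨆ (r : ℝ) (_ : 0 < r),
    (volume (ball x r)) ^ (α / (n : ℝ) - (m : ℝ)) *
      ∏ i, ∫⁻ y in ball x r,
        ENNReal.ofReal |b i x - b i y| * ENNReal.ofReal |f i y|

/-- The class `𝒢_ω^p` of almost decreasing functions `φ` (with weight `σ = ω^p`). -/
def Gclass {n : ℕ} (σ : Rn n → ℝ≥0∞) (p : ℝ) (φ : Rn n → ℝ → ℝ≥0∞) : Prop :=
  ∃ C : ℝ≥0∞, C ≠ ⊤ ∧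
    (∀ (x : Rn n) (r r' : ℝ), 0 < r → r ≤ r' → φ x r' ≤ C * φ x r) ∧
    (∀ (x₀ : Rn n) (r₀ : ℝ), 0 < r₀ → ∀ (x : Rn n) (r : ℝ), 0 < r → r ≤ r₀ →
      φ x₀ r₀ ≤ C * φ x r) ∧
    (∀ (x₀ : Rn n) (r₀ : ℝ), 0 < r₀ → ∀ (x : Rn n) (r : ℝ), 0 < r → r ≤ r₀ →
      φ x₀ r₀ * (wInt σ (ball x₀ r₀)) ^ (1 / p) ≤
        C * (φ x r * (wInt σ (ball x r)) ^ (1 / p)))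

/-- `essinf_{t < η < ∞} ∏_i φ_{1i}(x,η) ‖ω_i‖_{L^{p_i}(B(x,η))}`. -/
noncomputable def condNum {n m : ℕ} (φ1 : Fin m → Rn n → ℝ → ℝ≥0∞)
    (ω : Fin m → Rn n → ℝ≥0∞) (p : Fin m → ℝ) (x : Rn n) (t : ℝ) : ℝ≥0∞ :=
  essInf (fun η => ∏ i, φ1 i x η * lqN (ω i) (p i) (ball x η))
    (volume.restrict (Set.Ioi t))

/-- The supremum-type condition `[\vecφ_1, φ_2]_A` (with a logarithmic factor of order `k`;
`k = 0` recovers the plain condition). -/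
noncomputable def supCondA {n m : ℕ} (φ1 : Fin m → Rn n → ℝ → ℝ≥0∞)
    (φ2 : Rn n → ℝ → ℝ≥0∞) (ω : Fin m → Rn n → ℝ≥0∞) (p q : Fin m → ℝ)
    (k : ℕ) : ℝ≥0∞ :=
  ⨆ (x : Rn n) (r : ℝ) (_ : 0 < r), (φ2 x r)⁻¹ *
    ⨆ (t : ℝ) (_ : r < t), ENNReal.ofReal (1 + Real.log (t / r)) ^ k *
      (condNum φ1 ω p x t / ∏ i, lqN (ω i) (q i) (ball x t))

/-- The integral-type condition `[\vecφ_1, φ_2]_B` (with a logarithmic factor of order `k`). -/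
noncomputable def intCondB {n m : ℕ} (φ1 : Fin m → Rn n → ℝ → ℝ≥0∞)
    (φ2 : Rn n → ℝ → ℝ≥0∞) (ω : Fin m → Rn n → ℝ≥0∞) (p q : Fin m → ℝ)
    (k : ℕ) : ℝ≥0∞ :=
  ⨆ (x : Rn n) (r : ℝ) (_ : 0 < r), (φ2 x r)⁻¹ *
    ∫⁻ t in Set.Ioi r, ENNReal.ofReal (1 + Real.log (t / r)) ^ k *
      (condNum φ1 ω p x t / ∏ i, lqN (ω i) (q i) (ball x t)) / ENNReal.ofReal t

end Paper

namespace S0Aux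

lemma meas_rpow {α} [MeasurableSpace α] {f : α → ℝ≥0∞} (hf : Measurable f) (c : ℝ) :
    Measurable fun y => f y ^ c :=
  ENNReal.continuous_rpow_const.measurable.comp hf

lemma rpow_finset_sum {ι : Type*} (x : ℝ≥0∞) (hx0 : x ≠ 0) (hxt : x ≠ ⊤)
    (s : Finset ι) (c : ι → ℝ) :
    x ^ (∑ i ∈ s, c i) = ∏ i ∈ s, x ^ c i := by
  induction s using Finset.cons_induction with
  | empty => simp
  | cons i s hi ih => rw [Finset.sum_cons, Finset.prod_cons, ENNReal.rpow_add _ _ hx0 hxt, ih]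

/-- Generalized Hölder: the easy direction. -/
lemma holder_dir2 {α} [MeasurableSpace α] (μ : Measure α) {m : ℕ}
    (q : Fin m → ℝ) (qq : ℝ) (hq : ∀ i, 0 < q i) (hqq0 : 0 < qq)
    (hqq : 1 / qq = ∑ i, 1 / q i)
    (ω : Fin m → α → ℝ≥0∞) (hmeas : ∀ i, Measurable (ω i)) :
    (∫⁻ y, (∏ i, ω i y) ^ qq ∂μ) ^ (1 / qq) ≤
      ∏ i, (∫⁻ y, ω i y ^ q i ∂μ) ^ (1 / q i) := by
  have hsum : ∑ i : Fin m, qq / q i = 1 := by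
    have : ∑ i : Fin m, qq / q i = qq * ∑ i : Fin m, 1 / q i := by
      rw [Finset.mul_sum]; exact Finset.sum_congr rfl fun i _ => by
        rw [div_eq_mul_one_div]
    rw [this, ← hqq]
    field_simp
  have key := ENNReal.lintegral_prod_norm_pow_le (μ := μ) Finset.univ
    (f := fun i y => ω i y ^ q i)
    (fun i _ => (meas_rpow (hmeas i) _).aemeasurable)
    (p := fun i => qq / q i) hsum
    (fun i _ => div_nonneg hqq0.le (hq i).le)
  have h1 : ∀ y, (∏ i, ω i y) ^ qq = ∏ i, (ω i y ^ q i) ^ (qq / q i) := by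
    intro y
    rw [← ENNReal.prod_rpow_of_nonneg hqq0.le]
    refine Finset.prod_congr rfl fun i _ => ?_
    rw [← ENNReal.rpow_mul]
    congr 1
    field_simp [(hq i).ne']
  calc (∫⁻ y, (∏ i, ω i y) ^ qq ∂μ) ^ (1 / qq)
      = (∫⁻ y, ∏ i, (ω i y ^ q i) ^ (qq / q i) ∂μ) ^ (1 / qq) := by
        simp_rw [h1]
    _ ≤ (∏ i, (∫⁻ y, ω i y ^ q i ∂μ) ^ (qq / q i)) ^ (1 / qq) :=
        ENNReal.rpow_le_rpow key (by positivity)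
    _ = ∏ i, (∫⁻ y, ω i y ^ q i ∂μ) ^ (1 / q i) := by
        rw [← ENNReal.prod_rpow_of_nonneg (by positivity)]
        refine Finset.prod_congr rfl fun i _ => ?_
        rw [← ENNReal.rpow_mul]
        congr 1
        field_simp [hqq0.ne']

/-- The hard direction, per "ball" (abstract finite measure). -/
lemma key_dir1 {α : Type*} [MeasurableSpace α] (μ : Measure α) {m : ℕ}
    (q : Fin m → ℝ) (qq : ℝ) (hq : ∀ i, 0 < q i) (hqq0 : 0 < qq)
    (hqq : 1 / qq = ∑ i, 1 / q i)
    (ω : Fin m → α → ℝ≥0∞) (hmeas : ∀ i, Measurable (ω i))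
    (p : Fin m → ℝ) (hp : ∀ i, 1 < p i)
    (C : Fin m → ℝ≥0∞) (hC1 : ∀ i, 1 ≤ C i) (hCt : ∀ i, C i ≠ ⊤)
    (V : ℝ≥0∞) (hV0 : V ≠ 0) (hVt : V ≠ ⊤) (hμV : μ Set.univ = V)
    (hA : ∀ i, (V⁻¹ * ∫⁻ y, ω i y ^ q i ∂μ) *
        ((V⁻¹ * ∫⁻ y, (ω i y ^ q i) ^ (-(1 / (p i - 1))) ∂μ) ^ (p i - 1)) ≤ C i) :
    ∏ i, (∫⁻ y, ω i y ^ q i ∂μ) ^ (1 / q i) ≤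
      (∏ i, C i ^ (1 / q i)) * (∫⁻ y, (∏ i, ω i y) ^ qq ∂μ) ^ (1 / qq) := by
  classical
  have hp1 : ∀ i, (0:ℝ) < p i - 1 := fun i => sub_pos.2 (hp i)
  set L : Fin m → ℝ≥0∞ := fun i => ∫⁻ y, ω i y ^ q i ∂μ with hL
  set sE : Fin m → ℝ := fun i => q i / (p i - 1) with hsE
  set e : Fin m → ℝ := fun i => (p i - 1) / q i with he
  have hsE0 : ∀ i, 0 < sE i := fun i => div_pos (hq i) (hp1 i)
  have he0 : ∀ i, 0 < e i := fun i => div_pos (hp1 i) (hq i)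
  set N : Fin m → ℝ≥0∞ := fun i => ∫⁻ y, ω i y ^ (-(sE i)) ∂μ with hN
  set U : ℝ≥0∞ := ∫⁻ y, (∏ i, ω i y) ^ qq ∂μ with hU
  show ∏ i, L i ^ (1 / q i) ≤ (∏ i, C i ^ (1 / q i)) * U ^ (1 / qq)
  have hV0' : (0:ℝ≥0∞) < V := pos_iff_ne_zero.2 hV0
  have hVi0 : V⁻¹ ≠ 0 := ENNReal.inv_ne_zero.2 hVt
  have hVit : V⁻¹ ≠ ⊤ := ENNReal.inv_ne_top.2 hV0
  -- rewrite the A_p hypothesis in terms of N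
  have hA' : ∀ i, (V⁻¹ * L i) * ((V⁻¹ * N i) ^ (p i - 1)) ≤ C i := by
    intro i
    have hNrw : (∫⁻ y, (ω i y ^ q i) ^ (-(1 / (p i - 1))) ∂μ) = N i := by
      refine lintegral_congr fun y => ?_
      rw [← ENNReal.rpow_mul]
      congr 1
      show q i * -(1 / (p i - 1)) = -(q i / (p i - 1))
      rw [mul_neg, mul_one_div]
    have := hA i
    rw [hNrw] at this
    exact this
  -- the prefactor constant is nonzero and finite
  have hC₁0 : (∏ i, C i ^ (1 / q i)) ≠ 0 := by
    rw [Finset.prod_ne_zero_iff]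
    intro i _
    exact (ENNReal.rpow_pos_of_nonneg (lt_of_lt_of_le one_pos (hC1 i))
      (one_div_nonneg.2 (hq i).le)).ne'
  -- trivial case : some L i = 0
  by_cases hL0 : ∀ i, L i ≠ 0
  swap
  · push_neg at hL0
    obtain ⟨i, hi⟩ := hL0
    have : ∏ i, L i ^ (1 / q i) = 0 :=
      Finset.prod_eq_zero (Finset.mem_univ i)
        (by rw [hi]; exact ENNReal.zero_rpow_of_pos (one_div_pos.2 (hq i)))
    rw [this]
    exact zero_le
  -- N i is finite
  have hNt : ∀ i, N i ≠ ⊤ := by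
    intro i hNi
    have h := hA' i
    rw [hNi, ENNReal.mul_top hVi0, ENNReal.top_rpow_of_pos (hp1 i),
      ENNReal.mul_top (mul_ne_zero hVi0 (hL0 i))] at h
    exact hCt i (top_le_iff.1 h)
  -- each ω i is a.e. nonzero
  have hω0 : ∀ i, ∀ᵐ y ∂μ, ω i y ≠ 0 := by
    intro i
    rw [ae_iff]
    simp only [not_not]
    by_contra hpos
    have hms : MeasurableSet {y | ω i y = 0} := hmeas i (measurableSet_singleton 0)
    have htop : ∫⁻ y in {y | ω i y = 0}, ω i y ^ (-(sE i)) ∂μ = ⊤ := by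
      rw [setLIntegral_congr_fun_ae hms (ae_of_all _ fun y (hy : ω i y = 0) => by
        rw [hy, ENNReal.zero_rpow_of_neg (by simpa using hsE0 i)]),
        setLIntegral_const, ENNReal.top_mul hpos]
    exact hNt i (top_le_iff.1 (htop ▸ setLIntegral_le_lintegral _ _))
  -- degenerate case : some N i = 0 (then ω i = ⊤ a.e. and U = ⊤)
  by_cases hN0 : ∀ i, N i ≠ 0
  swap
  · push_neg at hN0
    obtain ⟨i, hNi⟩ := hN0
    have htop : ∀ᵐ y ∂μ, ω i y = ⊤ := by
      filter_upwards [(lintegral_eq_zero_iff (meas_rpow (hmeas i) _)).1 hNi] with y hy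
      rcases ENNReal.rpow_eq_zero_iff.1 hy with ⟨_, hps⟩ | ⟨ht, _⟩
      · exact absurd hps (not_lt.2 (by linarith [hsE0 i]))
      · exact ht
    have hUtop : U = ⊤ := by
      have hae : ∀ᵐ y ∂μ, (∏ j, ω j y) ^ qq = ⊤ := by
        filter_upwards [htop, ae_all_iff.2 hω0] with y hy hall
        have hprod : (∏ j, ω j y) = ⊤ := by
          rw [← Finset.mul_prod_erase _ _ (Finset.mem_univ i), hy,
            ENNReal.top_mul (Finset.prod_ne_zero_iff.2 fun j _ => hall j)]
        rw [hprod, ENNReal.top_rpow_of_pos hqq0]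
      rw [hU, lintegral_congr_ae hae, lintegral_const, hμV, ENNReal.top_mul hV0]
    rw [hUtop, ENNReal.top_rpow_of_pos (one_div_pos.2 hqq0), ENNReal.mul_top hC₁0]
    exact le_top
  -- main case: all L i ≠ 0, N i ∈ (0,∞)
  have hd0 : ∀ i, V⁻¹ * N i ≠ 0 := fun i => mul_ne_zero hVi0 (hN0 i)
  have hdt : ∀ i, V⁻¹ * N i ≠ ⊤ := fun i => ENNReal.mul_ne_top hVit (hNt i)
  have hb0 : ∀ i, (V⁻¹ * N i) ^ (p i - 1) ≠ 0 :=
    fun i => (ENNReal.rpow_pos (pos_iff_ne_zero.2 (hd0 i)) (hdt i)).ne'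
  have hbt : ∀ i, (V⁻¹ * N i) ^ (p i - 1) ≠ ⊤ :=
    fun i => ENNReal.rpow_ne_top_of_nonneg (hp1 i).le (hdt i)
  have hLt : ∀ i, L i ≠ ⊤ := by
    intro i hLi
    have h := hA' i
    rw [hLi, ENNReal.mul_top hVi0, ENNReal.top_mul (hb0 i)] at h
    exact hCt i (top_le_iff.1 h)
  -- each ω i is a.e. finite
  have hωt : ∀ i, ∀ᵐ y ∂μ, ω i y ≠ ⊤ := by
    intro i
    rw [ae_iff]
    simp only [not_not]
    by_contra hpos
    have hms : MeasurableSet {y | ω i y = ⊤} := hmeas i (measurableSet_singleton ⊤)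
    have htop : ∫⁻ y in {y | ω i y = ⊤}, ω i y ^ q i ∂μ = ⊤ := by
      rw [setLIntegral_congr_fun_ae hms (ae_of_all _ fun y (hy : ω i y = ⊤) => by
        rw [hy, ENNReal.top_rpow_of_pos (hq i)]),
        setLIntegral_const, ENNReal.top_mul hpos]
    exact hLt i (top_le_iff.1 (htop ▸ setLIntegral_le_lintegral _ _))
  have hgood : ∀ᵐ y ∂μ, ∀ i, ω i y ≠ 0 ∧ ω i y ≠ ⊤ :=
    ae_all_iff.2 fun i => (hω0 i).and (hωt i)
  -- Hölder with a dummy factor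
  set θ : ℝ := 1/qq + ∑ i, e i with hθ
  have hθ0 : 0 < θ :=
    add_pos_of_pos_of_nonneg (by positivity) (Finset.sum_nonneg fun i _ => (he0 i).le)
  set t : ℝ := min 1 θ⁻¹ with htdef
  have ht0 : 0 < t := lt_min one_pos (inv_pos.2 hθ0)
  have htθ : t * θ ≤ 1 := by
    calc t * θ ≤ θ⁻¹ * θ := mul_le_mul_of_nonneg_right (min_le_right _ _) hθ0.le
    _ = 1 := inv_mul_cancel₀ hθ0.ne'
  set g : Option (Option (Fin m)) → α → ℝ≥0∞ := fun j => match j with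
    | none => fun _ => 1
    | some none => fun y => (∏ i, ω i y) ^ qq
    | some (some i) => fun y => ω i y ^ (-(sE i)) with hg
  set ex : Option (Option (Fin m)) → ℝ := fun j => match j with
    | none => 1 - t * θ
    | some none => t / qq
    | some (some i) => t * e i with hex
  have hsum : ∑ j, ex j = 1 := by
    rw [Fintype.sum_option, Fintype.sum_option]
    show (1 - t * θ) + (t / qq + ∑ i, t * e i) = 1
    rw [← Finset.mul_sum, hθ, div_eq_mul_one_div]
    ring
  have hex0 : ∀ j, 0 ≤ ex j := by
    rintro (_ | _ | i)
    · show (0:ℝ) ≤ 1 - t * θ; linarith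
    · exact div_nonneg ht0.le hqq0.le
    · exact mul_nonneg ht0.le (he0 i).le
  have hmeasg : ∀ j, AEMeasurable (g j) μ := by
    rintro (_ | _ | i)
    · exact aemeasurable_const
    · exact (meas_rpow (Finset.measurable_prod _ fun i _ => hmeas i) _).aemeasurable
    · exact (meas_rpow (hmeas i) _).aemeasurable
  have hhol := ENNReal.lintegral_prod_norm_pow_le (μ := μ) Finset.univ
    (fun j _ => hmeasg j) hsum (fun j _ => hex0 j)
  -- the pointwise product is 1 a.e.
  have hpt : ∀ᵐ y ∂μ, ∏ j, g j y ^ ex j = 1 := by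
    filter_upwards [hgood] with y hy
    rw [Fintype.prod_option, Fintype.prod_option]
    show (1:ℝ≥0∞) ^ (1 - t * θ) * (((∏ i, ω i y) ^ qq) ^ (t / qq) *
      ∏ i, (ω i y ^ (-(sE i))) ^ (t * e i)) = 1
    have h1 : ((∏ i, ω i y) ^ qq) ^ (t / qq) = ∏ i, ω i y ^ t := by
      rw [← ENNReal.rpow_mul, mul_div_cancel₀ _ hqq0.ne', ← ENNReal.prod_rpow_of_nonneg ht0.le]
    have h2 : ∀ i, (ω i y ^ (-(sE i))) ^ (t * e i) = ω i y ^ (-t) := by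
      intro i
      rw [← ENNReal.rpow_mul]
      congr 1
      have hse : sE i * e i = 1 := by
        show (q i / (p i - 1)) * ((p i - 1) / q i) = 1
        rw [div_mul_div_comm, div_eq_one_iff_eq (mul_ne_zero (hp1 i).ne' (hq i).ne')]
        ring
      linear_combination (-t) * hse
    rw [ENNReal.one_rpow, one_mul, h1, Finset.prod_congr rfl fun i _ => h2 i,
      ← Finset.prod_mul_distrib]
    refine Finset.prod_eq_one fun i _ => ?_
    rw [← ENNReal.rpow_add _ _ (hy i).1 (hy i).2, add_neg_cancel, ENNReal.rpow_zero]
  have hLHS : ∫⁻ y, ∏ j, g j y ^ ex j ∂μ = V := by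
    rw [lintegral_congr_ae hpt, lintegral_one, hμV]
  have hRHS : ∏ j, (∫⁻ y, g j y ∂μ) ^ ex j
      = V ^ (1 - t * θ) * (U ^ (t / qq) * ∏ i, N i ^ (t * e i)) := by
    rw [Fintype.prod_option, Fintype.prod_option]
    show (∫⁻ _, (1:ℝ≥0∞) ∂μ) ^ (1 - t * θ) * ((∫⁻ y, (∏ i, ω i y) ^ qq ∂μ) ^ (t / qq) *
      ∏ i, (∫⁻ y, ω i y ^ (-(sE i)) ∂μ) ^ (t * e i)) = _
    rw [lintegral_one, hμV]
  -- the key inequality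
  have hK : V ^ θ ≤ U ^ (1 / qq) * ∏ i, N i ^ e i := by
    have hXt : U ^ (t / qq) * ∏ i, N i ^ (t * e i)
        = (U ^ (1 / qq) * ∏ i, N i ^ e i) ^ t := by
      rw [ENNReal.mul_rpow_of_nonneg _ _ ht0.le, ← ENNReal.prod_rpow_of_nonneg ht0.le]
      congr 1
      · rw [← ENNReal.rpow_mul, one_div, inv_mul_eq_div]
      · exact Finset.prod_congr rfl fun i _ => by rw [← ENNReal.rpow_mul, mul_comm]
    have hmain : V ≤ V ^ (1 - t * θ) * (U ^ (1 / qq) * ∏ i, N i ^ e i) ^ t := by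
      rw [← hXt, ← hRHS, ← hLHS]; exact hhol
    have hsplit : V = V ^ (1 - t * θ) * V ^ (t * θ) := by
      rw [← ENNReal.rpow_add _ _ hV0 hVt]
      have harith : 1 - t * θ + t * θ = 1 := by ring
      rw [harith, ENNReal.rpow_one]
    nth_rewrite 1 [hsplit] at hmain
    have hfac0 : V ^ (1 - t * θ) ≠ 0 := (ENNReal.rpow_pos hV0' hVt).ne'
    have hfact : V ^ (1 - t * θ) ≠ ⊤ := ENNReal.rpow_ne_top_of_nonneg (by linarith) hVt
    have h2 : V ^ (t * θ) ≤ (U ^ (1 / qq) * ∏ i, N i ^ e i) ^ t :=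
      (ENNReal.mul_le_mul_iff_right hfac0 hfact).1 hmain
    rw [mul_comm t θ, ENNReal.rpow_mul] at h2
    exact (ENNReal.rpow_le_rpow_iff ht0).1 h2
  -- per-index consequence of the A_p condition
  have hper : ∀ i, L i ^ (1 / q i) ≤
      C i ^ (1 / q i) * V ^ (1 / q i) * (V⁻¹ * N i) ^ (-(e i)) := by
    intro i
    have hstep : L i ≤ V * (C i * ((V⁻¹ * N i) ^ (p i - 1))⁻¹) := by
      have h1 : L i = V * ((V⁻¹ * L i) * ((V⁻¹ * N i) ^ (p i - 1)) *
          ((V⁻¹ * N i) ^ (p i - 1))⁻¹) := by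
        rw [mul_assoc (V⁻¹ * L i), ENNReal.mul_inv_cancel (hb0 i) (hbt i), mul_one,
          ← mul_assoc, ENNReal.mul_inv_cancel hV0 hVt, one_mul]
      rw [h1]
      exact mul_le_mul' le_rfl (mul_le_mul' (hA' i) le_rfl)
    have hqinn : (0:ℝ) ≤ 1 / q i := one_div_nonneg.2 (hq i).le
    calc L i ^ (1 / q i) ≤ (V * (C i * ((V⁻¹ * N i) ^ (p i - 1))⁻¹)) ^ (1 / q i) :=
          ENNReal.rpow_le_rpow hstep hqinn
      _ = V ^ (1 / q i) * (C i ^ (1 / q i) *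
          (((V⁻¹ * N i) ^ (p i - 1))⁻¹) ^ (1 / q i)) := by
          rw [ENNReal.mul_rpow_of_nonneg _ _ hqinn,
            ENNReal.mul_rpow_of_nonneg _ _ hqinn]
      _ = C i ^ (1 / q i) * V ^ (1 / q i) * (V⁻¹ * N i) ^ (-(e i)) := by
          rw [← ENNReal.rpow_neg, ← ENNReal.rpow_mul]
          have harel : -(p i - 1) * (1 / q i) = -(e i) := by
            show -(p i - 1) * (1 / q i) = -((p i - 1) / q i)
            rw [neg_mul, mul_one_div]
          rw [harel]
          ring
  -- assemble
  have hVsum : ∏ i : Fin m, V ^ (1 / q i) = V ^ (1 / qq) := by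
    rw [hqq, rpow_finset_sum V hV0 hVt]
  have hdsplit : ∀ i, (V⁻¹ * N i) ^ (-(e i)) = V ^ (e i) * N i ^ (-(e i)) := by
    intro i
    rw [ENNReal.mul_rpow_of_ne_top hVit (hNt i)]
    congr 1
    rw [← ENNReal.rpow_neg_one V, ← ENNReal.rpow_mul]
    norm_num
  calc ∏ i, L i ^ (1 / q i)
      ≤ ∏ i, (C i ^ (1 / q i) * V ^ (1 / q i) * (V⁻¹ * N i) ^ (-(e i))) :=
        Finset.prod_le_prod' fun i _ => hper i
    _ = (∏ i, C i ^ (1 / q i)) * ((∏ i, V ^ (1 / q i)) * ∏ i, (V⁻¹ * N i) ^ (-(e i))) := by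
        rw [Finset.prod_mul_distrib, Finset.prod_mul_distrib, mul_assoc]
    _ = (∏ i, C i ^ (1 / q i)) * (V ^ θ * ∏ i, N i ^ (-(e i))) := by
        congr 1
        rw [hVsum, Finset.prod_congr rfl fun i _ => hdsplit i, Finset.prod_mul_distrib,
          ← mul_assoc, ← rpow_finset_sum V hV0 hVt, ← ENNReal.rpow_add _ _ hV0 hVt, ← hθ]
    _ ≤ (∏ i, C i ^ (1 / q i)) * ((U ^ (1 / qq) * ∏ i, N i ^ e i) * ∏ i, N i ^ (-(e i))) :=
        mul_le_mul' le_rfl (mul_le_mul' hK le_rfl)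
    _ = (∏ i, C i ^ (1 / q i)) * U ^ (1 / qq) := by
        rw [mul_assoc, ← Finset.prod_mul_distrib]
        have : ∏ i, (N i ^ e i * N i ^ (-(e i))) = 1 :=
          Finset.prod_eq_one fun i _ => by
            rw [← ENNReal.rpow_add _ _ (hN0 i) (hNt i), add_neg_cancel, ENNReal.rpow_zero]
        rw [this, mul_one]

open Paper in
/-- Every `A_∞` weight satisfies an `A_p`-type inequality on every ball (with `p = 2`
in the `A_1` case), with a constant that is `≥ 1` and finite. -/
lemma toAp {n : ℕ} {w : Rn n → ℝ≥0∞} (hw : MuckAinfty w) :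
    ∃ (p : ℝ) (C : ℝ≥0∞), 1 < p ∧ C ≠ ⊤ ∧ 1 ≤ C ∧ ∀ (x : Rn n) (r : ℝ), 0 < r →
      ((volume (ball x r))⁻¹ * ∫⁻ y in ball x r, w y) *
        (((volume (ball x r))⁻¹ * ∫⁻ y in ball x r, (w y) ^ (-(1 / (p - 1)))) ^ (p - 1)) ≤ C := by
  rcases hw with ⟨C, hCt, h⟩ | ⟨p, hp1, C, hCt, h⟩
  · refine ⟨2, max C 1, one_lt_two, (max_lt hCt.lt_top one_lt_top).ne, le_max_right _ _, ?_⟩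
    intro x r hr
    have hV0 : volume (ball x r) ≠ 0 := (measure_ball_pos volume x hr).ne'
    have hVt : volume (ball x r) ≠ ⊤ := measure_ball_lt_top.ne
    set V := volume (ball x r) with hV
    set E := essInf w (volume.restrict (ball x r)) with hE
    have hae : ∀ᵐ y ∂(volume.restrict (ball x r)), E ≤ w y := ae_essInf_le
    have h2 : ∫⁻ y in ball x r, (w y) ^ (-(1 / ((2:ℝ) - 1))) ≤ E⁻¹ * V := by
      have hexp : (-(1 / ((2:ℝ) - 1))) = -1 := by norm_num
      rw [hexp]
      calc ∫⁻ y in ball x r, (w y) ^ (-1 : ℝ)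
          ≤ ∫⁻ _ in ball x r, E⁻¹ := by
            refine lintegral_mono_ae (hae.mono fun y hy => ?_)
            rw [ENNReal.rpow_neg_one]
            exact ENNReal.inv_le_inv.mpr hy
        _ = E⁻¹ * V := by rw [setLIntegral_const]
    calc (V⁻¹ * ∫⁻ y in ball x r, w y) *
          ((V⁻¹ * ∫⁻ y in ball x r, (w y) ^ (-(1 / ((2:ℝ) - 1)))) ^ ((2:ℝ) - 1))
        ≤ (C * E) * ((V⁻¹ * (E⁻¹ * V)) ^ ((2:ℝ) - 1)) :=
          mul_le_mul' (h x r hr)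
            (ENNReal.rpow_le_rpow (mul_le_mul' le_rfl h2) (by norm_num))
      _ = (C * E) * E⁻¹ := by
          rw [show ((2:ℝ) - 1) = 1 by norm_num, ENNReal.rpow_one]
          congr 1
          rw [mul_comm E⁻¹ V, ← mul_assoc, ENNReal.inv_mul_cancel hV0 hVt, one_mul]
      _ = C * (E * E⁻¹) := by rw [mul_assoc]
      _ ≤ C * 1 := mul_le_mul' le_rfl (ENNReal.mul_inv_le_one E)
      _ = C := mul_one C
      _ ≤ max C 1 := le_max_left _ _
  · exact ⟨p, max C 1, hp1, (max_lt hCt.lt_top one_lt_top).ne, le_max_right _ _,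
      fun x r hr => (h x r hr).trans (le_max_left _ _)⟩

end S0Aux


open Paper in
/-- if `ω_i^{q_i} ∈ A_∞` and `u_{\vecω}^q ∈ A_∞` (`u_{\vecω} = ∏ ω_i`,
`1/q = ∑ 1/q_i`, `q_i ∈ [1,∞)`), then `∏_i ‖ω_i‖_{L^{q_i}(B)} ≈ ‖u_{\vecω}‖_{L^q(B)}`
uniformly over balls `B`. -/
theorem statement0 {n m : ℕ} (q : Fin m → ℝ) (qq : ℝ)
    (hq : ∀ i, 1 ≤ q i) (hqq : 1 / qq = ∑ i, 1 / q i)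
    (ω : Fin m → Rn n → ℝ≥0∞) (hmeas : ∀ i, Measurable (ω i))
    (hωi : ∀ i, MuckAinfty (fun y => ω i y ^ q i))
    (hu : MuckAinfty (fun y => (∏ i, ω i y) ^ qq)) :
    ∃ C₁ C₂ : ℝ≥0∞, C₁ ≠ ⊤ ∧ C₂ ≠ ⊤ ∧ ∀ (x : Rn n) (r : ℝ), 0 < r →
      (∏ i, lqN (ω i) (q i) (ball x r)) ≤
          C₁ * lqN (fun y => ∏ i, ω i y) qq (ball x r) ∧
        lqN (fun y => ∏ i, ω i y) qq (ball x r) ≤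
          C₂ * ∏ i, lqN (ω i) (q i) (ball x r) := by
  rcases Nat.eq_zero_or_pos m with hm | hm
  · subst hm
    have hqq0 : qq = 0 := by
      have h0 : 1 / qq = 0 := by rw [hqq]; simp
      simpa [div_eq_zero_iff] using h0
    refine ⟨1, 1, one_ne_top, one_ne_top, fun x r hr => ?_⟩
    have hone : lqN (fun y => ∏ i : Fin 0, ω i y) qq (ball x r) = 1 := by
      simp [lqN, hqq0]
    rw [hone]
    simp
  · have hq0 : ∀ i, 0 < q i := fun i => lt_of_lt_of_le one_pos (hq i)
    have : Nonempty (Fin m) := ⟨⟨0, hm⟩⟩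
    have hqq0 : 0 < qq := by
      have hpos : 0 < ∑ i, 1 / q i :=
        Finset.sum_pos (fun i _ => one_div_pos.2 (hq0 i)) Finset.univ_nonempty
      rw [← hqq] at hpos
      exact one_div_pos.1 hpos
    choose p C hp hCt hC1 hA using fun i => S0Aux.toAp (hωi i)
    refine ⟨∏ i, C i ^ (1 / q i), 1, ?_, one_ne_top, fun x r hr => ?_⟩
    · exact (ENNReal.prod_lt_top fun i _ =>
        (ENNReal.rpow_ne_top_of_nonneg (one_div_nonneg.2 (hq0 i).le) (hCt i)).lt_top).ne
    constructor
    · have hV0 : volume (ball x r) ≠ 0 := (measure_ball_pos volume x hr).ne'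
      have hVt : volume (ball x r) ≠ ⊤ := measure_ball_lt_top.ne
      have hkey := S0Aux.key_dir1 (volume.restrict (ball x r)) q qq hq0 hqq0 hqq ω hmeas
        p hp C hC1 hCt (volume (ball x r)) hV0 hVt (by simp) ?_
      · simpa [lqN] using hkey
      · intro i
        simpa using hA i x r hr
    · rw [one_mul]
      have hhol := S0Aux.holder_dir2 (volume.restrict (ball x r)) q qq hq0 hqq0 hqq ω hmeas
      simpa [lqN] using hhol
end
end

section
/- Let $u$ be a continuous nonnegative function on $(0,\infty)$ and define the supremal operator $(\bar S_u g)(r)=\|ug\|_{L^\infty(r,\infty)}$. Suppose $v_1,v_2$ are nonnegative measurable functions with $\|v_1\|_{L^\infty(0,t)}\in(0,\infty)$ for every $t>0$. Then $\bar S_u$ is bounded from $L^\infty((0,\infty),v_1)$ to $L^\infty((0,\infty),v_2)$ on the cone $\mathbb{A}$ of nondecreasing functions vanishing at $0^+$ if and only if $\big\|v_2\,\bar S_u\big(\|v_1\|_{L^\infty(\cdot,\infty)}^{-1}\big)\big\|_{L^\infty(0,\infty)}<\infty$. -/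
open MeasureTheory Metric Set ENNReal
open scoped BigOperators NNReal

noncomputable section

namespace St6

open Filter

variable (v₁ : ℝ → ℝ≥0∞)

def V (t : ℝ) : ℝ≥0∞ := essSup v₁ (volume.restrict (Set.Ioi t))

lemma V_anti : Antitone (V v₁) := by
  intro a b hab
  exact essSup_mono_measure' (Measure.restrict_mono (Ioi_subset_Ioi hab) le_rfl)

lemma ae_le_V : ∀ᵐ t ∂(volume : Measure ℝ), 0 < t → v₁ t ≤ V v₁ t := by
  have hq : ∀ q : ℚ, ∀ᵐ t ∂(volume : Measure ℝ), t ∈ Set.Ioi (q : ℝ) → v₁ t ≤ V v₁ q := by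
    intro q
    exact (ae_restrict_iff' measurableSet_Ioi).mp (ENNReal.ae_le_essSup v₁)
  have hcont : ∀ᵐ t ∂(volume : Measure ℝ), ContinuousAt (V v₁) t := by
    rw [ae_iff]
    exact ((V_anti v₁).countable_not_continuousAt).measure_zero _
  filter_upwards [ae_all_iff.2 hq, hcont] with t ht htc htpos
  by_contra hlt
  push_neg at hlt
  obtain ⟨c, hc1, hc2⟩ := exists_between hlt
  have hmem : V v₁ ⁻¹' Iio c ∈ nhds t := htc (isOpen_Iio.mem_nhds hc1)
  obtain ⟨ε, hε, hball⟩ := Metric.mem_nhds_iff.mp hmem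
  have hlt' : max (t / 2) (t - ε / 2) < t := by
    apply max_lt <;> linarith
  obtain ⟨q, hq1, hq2⟩ := exists_rat_btwn hlt'
  have hq0 : (0 : ℝ) < q := lt_of_lt_of_le (by linarith) ((le_max_left _ _).trans hq1.le)
  have hqball : (q : ℝ) ∈ Metric.ball t ε := by
    rw [Metric.mem_ball, Real.dist_eq, abs_sub_lt_iff]
    constructor
    · linarith
    · have := (le_max_right (t / 2) (t - ε / 2)).trans hq1.le
      linarith
  have hVq : V v₁ q < c := hball hqball
  exact absurd ((ht q hq2).trans_lt hVq) (not_lt.mpr hc2.le)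

lemma essSup_v_mul_inv_V_le_one :
    essSup (fun t => v₁ t * (V v₁ t)⁻¹) (volume.restrict (Set.Ioi (0 : ℝ))) ≤ 1 := by
  refine essSup_le_of_ae_le _ ?_
  filter_upwards [ae_restrict_of_ae (ae_le_V v₁), ae_restrict_mem measurableSet_Ioi]
    with t ht htmem
  calc v₁ t * (V v₁ t)⁻¹ ≤ V v₁ t * (V v₁ t)⁻¹ := mul_le_mul_left (ht htmem) _
    _ ≤ 1 := by
        rw [← div_eq_mul_inv]
        exact ENNReal.div_self_le_one

end St6

/-- the supremal operator `S̄_u g(r) = ‖u g‖_{L^∞(r,∞)}` is bounded from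
`L^∞((0,∞),v₁)` to `L^∞((0,∞),v₂)` on the cone `𝔸` of nondecreasing functions vanishing
at `0⁺` iff `‖v₂ S̄_u(‖v₁‖_{L^∞(·,∞)}⁻¹)‖_{L^∞(0,∞)} < ∞`. -/
theorem statement6 (u v₁ v₂ : ℝ → ℝ≥0∞)
    (hu : ContinuousOn u (Set.Ioi (0 : ℝ)))
    (hv₁ : Measurable v₁) (hv₂ : Measurable v₂)
    (hv₁fin : ∀ t : ℝ, 0 < t →
      0 < essSup v₁ (volume.restrict (Set.Ioo 0 t)) ∧
        essSup v₁ (volume.restrict (Set.Ioo 0 t)) ≠ ⊤) :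
    (∃ C : ℝ≥0∞, C ≠ ⊤ ∧ ∀ g : ℝ → ℝ≥0∞,
        MonotoneOn g (Set.Ioi (0 : ℝ)) →
        Filter.Tendsto g (nhdsWithin 0 (Set.Ioi (0 : ℝ))) (nhds 0) →
        essSup (fun r => v₂ r * essSup (fun t => u t * g t) (volume.restrict (Set.Ioi r)))
            (volume.restrict (Set.Ioi (0 : ℝ))) ≤
          C * essSup (fun t => v₁ t * g t) (volume.restrict (Set.Ioi (0 : ℝ)))) ↔
      essSup (fun r => v₂ r *
          essSup (fun t => u t * (essSup v₁ (volume.restrict (Set.Ioi t)))⁻¹)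
            (volume.restrict (Set.Ioi r)))
        (volume.restrict (Set.Ioi (0 : ℝ))) ≠ ⊤ := by
  have hVdef : ∀ t, essSup v₁ (volume.restrict (Set.Ioi t)) = St6.V v₁ t := fun _ => rfl
  simp only [hVdef]
  set V : ℝ → ℝ≥0∞ := St6.V v₁ with hV
  set S : ℝ → ℝ≥0∞ := fun r => essSup (fun t => u t * (V t)⁻¹) (volume.restrict (Set.Ioi r))
    with hS
  set B : ℝ≥0∞ := essSup (fun r => v₂ r * S r) (volume.restrict (Set.Ioi (0 : ℝ))) with hB
  constructor
  · -- forward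
    rintro ⟨C, hC, hbd⟩
    set gN : ℕ → ℝ → ℝ≥0∞ := fun n t => if t ≤ ((n : ℝ) + 1)⁻¹ then 0 else (V t)⁻¹ with hgN
    have hmono : ∀ n, MonotoneOn (gN n) (Set.Ioi (0 : ℝ)) := by
      intro n a _ b _ hab
      simp only [hgN]
      by_cases h1 : b ≤ ((n : ℝ) + 1)⁻¹
      · have h2 : a ≤ ((n : ℝ) + 1)⁻¹ := hab.trans h1
        simp [h1, h2]
      · by_cases h2 : a ≤ ((n : ℝ) + 1)⁻¹
        · simp [h1, h2]
        · simp only [h1, h2, if_false]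
          exact ENNReal.inv_le_inv.mpr (St6.V_anti v₁ hab)
    have htend : ∀ n, Filter.Tendsto (gN n) (nhdsWithin 0 (Set.Ioi (0 : ℝ))) (nhds 0) := by
      intro n
      have hev : (fun _ : ℝ => (0 : ℝ≥0∞)) =ᶠ[nhdsWithin 0 (Set.Ioi (0 : ℝ))] gN n := by
        filter_upwards [Ioo_mem_nhdsGT_of_mem
          (show (0 : ℝ) ∈ Set.Ico (0 : ℝ) (((n : ℝ) + 1)⁻¹) from ⟨le_refl _, by positivity⟩)]
          with t ht
        simp [hgN, ht.2.le]
      exact tendsto_const_nhds.congr' hev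
    have hle1 : ∀ n, essSup (fun t => v₁ t * gN n t) (volume.restrict (Set.Ioi (0 : ℝ))) ≤ 1 := by
      intro n
      refine le_trans (essSup_mono_ae (ae_of_all _ fun t => ?_)) (St6.essSup_v_mul_inv_V_le_one v₁)
      simp only [hgN]
      split_ifs
      · simp
      · exact le_rfl
    have hCn : ∀ n, essSup (fun r => v₂ r *
        essSup (fun t => u t * gN n t) (volume.restrict (Set.Ioi r)))
        (volume.restrict (Set.Ioi (0 : ℝ))) ≤ C := by
      intro n
      refine (hbd (gN n) (hmono n) (htend n)).trans ?_
      calc C * essSup (fun t => v₁ t * gN n t) (volume.restrict (Set.Ioi (0 : ℝ)))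
          ≤ C * 1 := mul_le_mul_right (hle1 n) C
        _ = C := mul_one C
    have hae : ∀ᵐ r ∂(volume.restrict (Set.Ioi (0 : ℝ))), v₂ r * S r ≤ C := by
      have hae' : ∀ n, ∀ᵐ r ∂(volume.restrict (Set.Ioi (0 : ℝ))),
          v₂ r * essSup (fun t => u t * gN n t) (volume.restrict (Set.Ioi r)) ≤ C := by
        intro n
        filter_upwards [ENNReal.ae_le_essSup
          (fun r => v₂ r * essSup (fun t => u t * gN n t) (volume.restrict (Set.Ioi r)))]
          with r hr
        exact hr.trans (hCn n)
      filter_upwards [ae_all_iff.2 hae', ae_restrict_mem measurableSet_Ioi] with r h1 h2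
      obtain ⟨n, hn⟩ := exists_nat_ge r⁻¹
      have hrpos : (0 : ℝ) < r := h2
      have hninv : ((n : ℝ) + 1)⁻¹ ≤ r := by
        have h3 : r⁻¹ ≤ (n : ℝ) + 1 := hn.trans (by linarith)
        have h4 := one_div_le_one_div_of_le (inv_pos.mpr hrpos) h3
        rwa [one_div, one_div, inv_inv] at h4
      have hcongr : S r = essSup (fun t => u t * gN n t) (volume.restrict (Set.Ioi r)) := by
        refine essSup_congr_ae ((ae_restrict_iff' measurableSet_Ioi).2 (ae_of_all _ fun t ht => ?_))
        have : ¬ t ≤ ((n : ℝ) + 1)⁻¹ := not_le.mpr (lt_of_le_of_lt hninv ht)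
        simp [hgN, this]
      rw [hcongr]
      exact h1 n
    exact ne_top_of_le_ne_top hC (essSup_le_of_ae_le C hae)
  · -- backward
    intro hBtop
    refine ⟨B + 1, ENNReal.add_ne_top.mpr ⟨hBtop, ENNReal.one_ne_top⟩, fun g hg hg0 => ?_⟩
    set A : ℝ≥0∞ := essSup (fun t => v₁ t * g t) (volume.restrict (Set.Ioi (0 : ℝ))) with hA
    rcases eq_or_ne A ⊤ with hAtop | hAtop
    · rw [hAtop, ENNReal.mul_top (by simp : B + 1 ≠ 0)]
      exact le_top
    rcases eq_or_ne A 0 with hA0 | hA0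
    · -- degenerate case
      refine le_trans (essSup_le_of_ae_le 0 ?_) (zero_le)
      have hv1g : ∀ᵐ t ∂(volume.restrict (Set.Ioi (0 : ℝ))), v₁ t * g t = 0 :=
        ENNReal.essSup_eq_zero_iff.mp hA0
      filter_upwards [ENNReal.ae_le_essSup (fun r => v₂ r * S r),
        ae_restrict_mem measurableSet_Ioi] with r hBr hr
      by_cases hv2 : v₂ r = 0
      · simp [hv2]
      have hSr : S r ≠ ⊤ := by
        intro hS'
        rw [hS', ENNReal.mul_top hv2] at hBr
        exact hBtop (top_le_iff.mp hBr)
      have hinner : essSup (fun t => u t * g t) (volume.restrict (Set.Ioi r)) ≤ 0 := by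
        refine essSup_le_of_ae_le _ ?_
        filter_upwards [ENNReal.ae_le_essSup (μ := volume.restrict (Set.Ioi r))
          (fun t => u t * (V t)⁻¹), ae_restrict_mem measurableSet_Ioi] with t hKt htr
        by_cases hu0 : u t = 0
        · simp [hu0]
        have hVt : V t ≠ 0 := by
          intro h0
          rw [h0, ENNReal.inv_zero, ENNReal.mul_top hu0] at hKt
          exact hSr (top_le_iff.mp hKt)
        have hfreq : ¬ (∀ᵐ s ∂(volume.restrict (Set.Ioi t)), v₁ s = 0) := by
          intro h
          exact hVt (ENNReal.essSup_eq_zero_iff.mpr h)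
        have hzero : ∀ᵐ s ∂(volume.restrict (Set.Ioi t)), v₁ s * g s = 0 := by
          have hsub : volume.restrict (Set.Ioi t) ≤ volume.restrict (Set.Ioi (0 : ℝ)) :=
            Measure.restrict_mono (Ioi_subset_Ioi (le_of_lt (lt_trans hr htr))) le_rfl
          exact hv1g.filter_mono (ae_mono hsub)
        obtain ⟨s, hs1, hs2, hs3⟩ :=
          ((Filter.not_eventually.mp hfreq).and_eventually
            (hzero.and (ae_restrict_mem measurableSet_Ioi))).exists
        have hgs : g s = 0 := by
          rcases mul_eq_zero.mp hs2 with h | h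
          · exact absurd h hs1
          · exact h
        have htpos : (0 : ℝ) < t := lt_trans hr htr
        have hgt : g t ≤ g s := hg htpos (lt_trans htpos hs3) hs3.le
        have : g t = 0 := le_antisymm (hgs ▸ hgt) (zero_le)
        simp [this]
      calc v₂ r * essSup (fun t => u t * g t) (volume.restrict (Set.Ioi r))
          ≤ v₂ r * 0 := mul_le_mul_right hinner _
        _ = 0 := mul_zero _
    · -- main case
      have hgle : ∀ t ∈ Set.Ioi (0 : ℝ), g t ≤ A * (V t)⁻¹ := by
        intro t ht
        have hVle : V t ≤ A / g t := by
          refine essSup_le_of_ae_le _ ?_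
          have hAae : ∀ᵐ s ∂(volume.restrict (Set.Ioi t)), v₁ s * g s ≤ A := by
            have hsub : volume.restrict (Set.Ioi t) ≤ volume.restrict (Set.Ioi (0 : ℝ)) :=
              Measure.restrict_mono (Ioi_subset_Ioi (le_of_lt ht)) le_rfl
            exact (ENNReal.ae_le_essSup (fun s => v₁ s * g s)).filter_mono (ae_mono hsub)
          filter_upwards [hAae, ae_restrict_mem measurableSet_Ioi] with s hsA hst
          have hgs : g t ≤ g s := hg ht (lt_trans (mem_Ioi.mp ht) hst) hst.le
          have : v₁ s * g t ≤ A := le_trans (mul_le_mul_right hgs _) hsA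
          exact (ENNReal.le_div_iff_mul_le (Or.inr hA0) (Or.inr hAtop)).mpr this
        have h1 : V t * g t ≤ A := (ENNReal.le_div_iff_mul_le (Or.inr hA0) (Or.inr hAtop)).mp hVle
        rw [mul_comm] at h1
        rw [← div_eq_mul_inv] at *
        exact (ENNReal.le_div_iff_mul_le (Or.inr hA0) (Or.inr hAtop)).mpr h1
      refine essSup_le_of_ae_le _ ?_
      filter_upwards [ENNReal.ae_le_essSup (fun r => v₂ r * S r),
        ae_restrict_mem measurableSet_Ioi] with r hBr hr
      have h2 : essSup (fun t => u t * g t) (volume.restrict (Set.Ioi r)) ≤ A * S r := by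
        calc essSup (fun t => u t * g t) (volume.restrict (Set.Ioi r))
            ≤ essSup (fun t => A * (u t * (V t)⁻¹)) (volume.restrict (Set.Ioi r)) := by
              refine essSup_mono_ae ((ae_restrict_iff' measurableSet_Ioi).2
                (ae_of_all _ fun t ht => ?_))
              have htpos : (0 : ℝ) < t := lt_trans hr ht
              calc u t * g t ≤ u t * (A * (V t)⁻¹) := mul_le_mul_right (hgle t htpos) _
                _ = A * (u t * (V t)⁻¹) := mul_left_comm _ _ _
          _ = A * S r := ENNReal.essSup_const_mul
      calc v₂ r * essSup (fun t => u t * g t) (volume.restrict (Set.Ioi r))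
          ≤ v₂ r * (A * S r) := mul_le_mul_right h2 _
        _ = A * (v₂ r * S r) := by ring
        _ ≤ A * B := mul_le_mul_right hBr _
        _ ≤ (B + 1) * A := by rw [mul_comm A B]; exact mul_le_mul_left le_self_add _
end
end
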